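/- Pure singleton objective (λ = 0), score formula: assume K ≥ 2 and λ = 0. Then the nonconformity score satisfies r(1) = 0 and r(i) = 1/(1 − γ_1) for every i ∈ {2,…,K}; equivalently, r(i) = 1_{i ≥ 2}·(1 − γ_1)^{−1}. -/
import Mathlib


open Finset

noncomputable def Gam (γ : ℕ → ℝ) (k : ℕ) : ℝ := ∑ i ∈ Finset.Icc 1 k, γ i

noncomputable def gfun (lam : ℝ) (k : ℕ) : ℝ := (if 1 < k then 1 else 0) + lam * (k : ℝ)

noncomputable def Psi (γ : ℕ → ℝ) (lam η : ℝ) (k : ℕ) : ℝ := gfun lam k - η * Gam γ k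

noncomputable def kappa (γ : ℕ → ℝ) (lam : ℝ) (K : ℕ) (η : ℝ) : ℕ :=
  sInf {k : ℕ | k ≤ K ∧ ∀ j ≤ K, Psi γ lam η k ≤ Psi γ lam η j}

noncomputable def score (γ : ℕ → ℝ) (lam : ℝ) (K : ℕ) (i : ℕ) : ℝ :=
  sInf {η : ℝ | 0 ≤ η ∧ i ≤ kappa γ lam K η}

noncomputable def ell (γ : ℕ → ℝ) (lam η : ℝ) (S : Finset ℕ) : ℝ :=
  (if 1 < S.card then 1 else 0) + lam * (S.card : ℝ) - η * ∑ i ∈ S, γ i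

noncomputable def etaSlope (γ : ℕ → ℝ) (lam : ℝ) (v : ℕ → ℕ) (i : ℕ) : ℝ :=
  (gfun lam (v i) - gfun lam (v (i - 1))) / (Gam γ (v i) - Gam γ (v (i - 1)))

/-- Pure singleton objective (λ = 0), score formula: r(1) = 0 and
r(i) = 1/(1 − γ₁) for every i ∈ {2,…,K}. -/
theorem stmt15 (K : ℕ) (hK : 2 ≤ K) (γ : ℕ → ℝ) (lam : ℝ) (hlam : lam = 0)
    (hmono : ∀ i j : ℕ, 1 ≤ i → i ≤ j → j ≤ K → γ j ≤ γ i)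
    (hposK : 0 < γ K)
    (hsum : ∑ i ∈ Finset.Icc 1 K, γ i = 1) :
    score γ lam K 1 = 0 ∧
    (∀ i : ℕ, 2 ≤ i → i ≤ K → score γ lam K i = 1 / (1 - γ 1)) := by
  subst hlam
  -- positivity of the γ i
  have hγpos : ∀ i, 1 ≤ i → i ≤ K → 0 < γ i := fun i h1 h2 =>
    lt_of_lt_of_le hposK (hmono i K h1 h2 le_rfl)
  have hGam0 : Gam γ 0 = 0 := by simp [Gam]
  have hGam1 : Gam γ 1 = γ 1 := by simp [Gam]
  have hGamK : Gam γ K = 1 := hsum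
  -- strict monotonicity of Gam
  have hGamlt : ∀ a b : ℕ, a < b → b ≤ K → Gam γ a < Gam γ b := by
    intro a b hab hbK
    have he : ∀ n : ℕ, Finset.Icc 1 n = Finset.Ioc 0 n := by
      intro n; ext x; simp [Finset.mem_Icc, Finset.mem_Ioc]; omega
    have hsplit : Gam γ b = Gam γ a + ∑ i ∈ Finset.Ioc a b, γ i := by
      unfold Gam
      rw [he a, he b, ← Finset.sum_Ioc_consecutive _ (Nat.zero_le a) (le_of_lt hab)]
    have hpos : 0 < ∑ i ∈ Finset.Ioc a b, γ i := by
      apply Finset.sum_pos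
      · intro i hi
        rw [Finset.mem_Ioc] at hi
        exact hγpos i (by omega) (le_trans hi.2 hbK)
      · exact Finset.nonempty_Ioc.mpr hab
    linarith [hsplit]
  have hGamle : ∀ a b : ℕ, a ≤ b → b ≤ K → Gam γ a ≤ Gam γ b := by
    intro a b hab hbK
    rcases eq_or_lt_of_le hab with h | h
    · rw [h]
    · exact (hGamlt a b h hbK).le
  have hγ1pos : 0 < γ 1 := hγpos 1 le_rfl (le_trans one_le_two hK)
  have hγ1lt : γ 1 < 1 := by
    have := hGamlt 1 K (lt_of_lt_of_le one_lt_two hK) le_rfl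
    rw [hGam1, hGamK] at this; exact this
  have h1γ : 0 < 1 - γ 1 := by linarith
  have hPsi : ∀ η : ℝ, ∀ k : ℕ, Psi γ 0 η k = (if 1 < k then 1 else 0) - η * Gam γ k := by
    intro η k; simp [Psi, gfun]
  -- the argmin set is nonempty
  have hSne : ∀ η : ℝ, ∃ m, m ∈ {k : ℕ | k ≤ K ∧ ∀ j ≤ K, Psi γ 0 η k ≤ Psi γ 0 η j} := by
    intro η
    obtain ⟨m, hm, hmin⟩ := Finset.exists_min_image (Finset.Iic K) (Psi γ 0 η)
      ⟨0, Finset.mem_Iic.mpr (Nat.zero_le K)⟩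
    exact ⟨m, Finset.mem_Iic.mp hm, fun j hj => hmin j (Finset.mem_Iic.mpr hj)⟩
  -- κ(0) = 0
  have hk0 : kappa γ 0 K 0 = 0 := by
    have h0 : (0 : ℕ) ∈ {k : ℕ | k ≤ K ∧ ∀ j ≤ K, Psi γ 0 0 k ≤ Psi γ 0 0 j} := by
      refine ⟨Nat.zero_le K, fun j hj => ?_⟩
      rw [hPsi, hPsi, hGam0]
      have h : (0:ℝ) ≤ if 1 < j then (1:ℝ) else 0 := by split <;> norm_num
      rw [if_neg (by omega : ¬ (1:ℕ) < 0)]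
      simp only [zero_mul, mul_zero, sub_zero]
      linarith
    exact Nat.le_zero.mp (Nat.sInf_le h0)
  -- κ(η) = 1 for 0 < η with η(1-γ₁) ≤ 1
  have hk1 : ∀ η : ℝ, 0 < η → η * (1 - γ 1) ≤ 1 → kappa γ 0 K η = 1 := by
    intro η hη hηA
    have h1mem : (1 : ℕ) ∈ {k : ℕ | k ≤ K ∧ ∀ j ≤ K, Psi γ 0 η k ≤ Psi γ 0 η j} := by
      refine ⟨le_trans one_le_two hK, fun j hj => ?_⟩
      rw [hPsi, hPsi, hGam1, if_neg (lt_irrefl 1)]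
      by_cases h : 1 < j
      · rw [if_pos h]
        have hΓ1 : Gam γ 1 ≤ Gam γ j := hGamle 1 j h.le hj
        have hΓK : Gam γ j ≤ 1 := hGamK ▸ hGamle j K hj le_rfl
        nlinarith
      · rw [if_neg h]
        have hΓ : Gam γ j ≤ γ 1 := by
          interval_cases j
          · rw [hGam0]; linarith
          · rw [hGam1]
        nlinarith
    have h0not : (0 : ℕ) ∉ {k : ℕ | k ≤ K ∧ ∀ j ≤ K, Psi γ 0 η k ≤ Psi γ 0 η j} := by
      rintro ⟨-, h⟩
      have := h 1 (le_trans one_le_two hK)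
      rw [hPsi, hPsi, hGam0, hGam1] at this
      simp at this
      nlinarith
    have hle : kappa γ 0 K η ≤ 1 := Nat.sInf_le h1mem
    have hmem : kappa γ 0 K η ∈ _ := Nat.sInf_mem ⟨1, h1mem⟩
    interval_cases h : kappa γ 0 K η
    · exact absurd (h ▸ hmem) h0not
    · rfl
  -- κ(η) = K for η(1-γ₁) > 1
  have hkK : ∀ η : ℝ, 1 < η * (1 - γ 1) → kappa γ 0 K η = K := by
    intro η hηA
    have hη : 0 < η := by nlinarith
    have hη1 : 1 < η := by nlinarith
    have hmem := Nat.sInf_mem (hSne η)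
    set m := kappa γ 0 K η with hmdef
    obtain ⟨hmK, hmin⟩ := hmem
    by_contra hne
    have hmlt : m < K := lt_of_le_of_ne hmK hne
    have hPK : Psi γ 0 η K < Psi γ 0 η m := by
      rw [hPsi, hPsi, hGamK, if_pos (lt_of_lt_of_le one_lt_two hK)]
      by_cases h2 : 1 < m
      · rw [if_pos h2]
        have := hGamlt m K hmlt le_rfl
        rw [hGamK] at this
        nlinarith
      · rw [if_neg h2]
        interval_cases m
        · rw [hGam0]; nlinarith
        · rw [hGam1]; nlinarith
    exact absurd (hmin K le_rfl) (not_le.mpr hPK)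
  -- score 1 = 0
  have hset1 : {η : ℝ | 0 ≤ η ∧ 1 ≤ kappa γ 0 K η} = Set.Ioi (0 : ℝ) := by
    ext η
    simp only [Set.mem_setOf_eq, Set.mem_Ioi]
    constructor
    · rintro ⟨hη0, hκ⟩
      rcases lt_or_eq_of_le hη0 with h | h
      · exact h
      · exfalso; rw [← h, hk0] at hκ; omega
    · intro hη
      refine ⟨hη.le, ?_⟩
      by_cases h : η * (1 - γ 1) ≤ 1
      · rw [hk1 η hη h]
      · rw [hkK η (not_le.mp h)]; omega
  constructor
  · rw [score, hset1]; exact csInf_Ioi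
  · intro i hi2 hiK
    have hsetA : {η : ℝ | 0 ≤ η ∧ i ≤ kappa γ 0 K η} = Set.Ioi (1 / (1 - γ 1)) := by
      ext η
      simp only [Set.mem_setOf_eq, Set.mem_Ioi]
      constructor
      · rintro ⟨hη0, hκ⟩
        rw [div_lt_iff₀ h1γ]
        by_contra h
        push_neg at h
        rcases lt_or_eq_of_le hη0 with hη | hη
        · rw [hk1 η hη (by nlinarith)] at hκ; omega
        · rw [← hη, hk0] at hκ; omega
      · intro hη
        rw [div_lt_iff₀ h1γ] at hη
        have hη0 : 0 < η := by nlinarith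
        refine ⟨hη0.le, ?_⟩
        rw [hkK η hη]; exact hiK
    rw [score, hsetA]; exact csInf_Ioi
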